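/- arXiv:2404.06719 — 4 statements merged into one kernel-verified Lean document; each statement's English description precedes it below -/
import Mathlib

section
/- Let n ≥ 1 and let f : ℝⁿ → [0,∞) be a measurable function with ∫_{ℝⁿ} f(x) dx = 1, such that x ↦ |x|² f(x) is Lebesgue integrable and x ↦ f(x) log f(x) is Lebesgue integrable. Then −∫_{ℝⁿ} f(x) log f(x) dx ≤ (n/2) · log( (2πe/n) · ∫_{ℝⁿ} |x|² f(x) dx ). -/
open MeasureTheory Real

/-- Gibbs pointwise inequality: for `a ≥ 0` and `c > 0`,
`a log c - a log a ≤ c - a`. -/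
lemma gibbs_pointwise {a c : ℝ} (ha : 0 ≤ a) (hc : 0 < c) :
    a * Real.log c - a * Real.log a ≤ c - a := by
  rcases eq_or_lt_of_le ha with h | h
  · simp [← h, hc.le]
  · have h1 : Real.log c - Real.log a ≤ c / a - 1 := by
      have := Real.log_le_sub_one_of_pos (div_pos hc h)
      rwa [Real.log_div hc.ne' h.ne'] at this
    have := mul_le_mul_of_nonneg_left h1 h.le
    calc a * Real.log c - a * Real.log a = a * (Real.log c - Real.log a) := by ring
    _ ≤ a * (c / a - 1) := this
    _ = c - a := by field_simp

/-- **Shannon's inequality on ℝⁿ.** For a probability density `f` on `ℝⁿ` with finite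
second moment and integrable entropy integrand, the entropy `-∫ f log f` is bounded by
`(n/2) log((2πe/n) ∫ |x|² f)`. -/
theorem shannon_inequality_Rn (n : ℕ) (hn : 1 ≤ n)
    (f : EuclideanSpace ℝ (Fin n) → ℝ)
    (hf_meas : Measurable f) (hf_nonneg : ∀ x, 0 ≤ f x)
    (hf_int : Integrable f) (hf_one : ∫ x, f x = 1)
    (h2 : Integrable (fun x => ‖x‖ ^ 2 * f x))
    (hlog : Integrable (fun x => f x * Real.log (f x))) :
    -∫ x, f x * Real.log (f x) ≤
      (n / 2 : ℝ) * Real.log ((2 * π * Real.exp 1 / n) * ∫ x, ‖x‖ ^ 2 * f x) := by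
  haveI : Nonempty (Fin n) := ⟨⟨0, hn⟩⟩
  haveI : Nontrivial (EuclideanSpace ℝ (Fin n)) := by
    infer_instance
  set S := ∫ x, ‖x‖ ^ 2 * f x with hS
  have hS_nonneg : 0 ≤ S :=
    integral_nonneg fun x => mul_nonneg (by positivity) (hf_nonneg x)
  -- S > 0
  have hS_pos : 0 < S := by
    rcases hS_nonneg.lt_or_eq with h | h
    · exact h
    · exfalso
      have h0 : (fun x => ‖x‖ ^ 2 * f x) =ᵐ[volume] 0 := by
        rw [← integral_eq_zero_iff_of_nonneg
          (fun x => mul_nonneg (by positivity) (hf_nonneg x)) h2]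
        exact h.symm
      have hne : ∀ᵐ (x : EuclideanSpace ℝ (Fin n)), x ≠ 0 := by
        have : volume ({0} : Set (EuclideanSpace ℝ (Fin n))) = 0 :=
          measure_singleton 0
        rw [ae_iff]
        simpa [Set.setOf_eq_eq_singleton'] using this
      have hf0 : f =ᵐ[volume] 0 := by
        filter_upwards [h0, hne] with x hx hxne
        have hx2 : (0:ℝ) < ‖x‖ ^ 2 := by
          have : ‖x‖ ≠ 0 := by simpa using hxne
          positivity
        have := hx
        simp only [Pi.zero_apply] at this ⊢
        exact (mul_eq_zero.mp this).resolve_left hx2.ne'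
      have : ∫ x, f x = 0 := by
        rw [integral_congr_ae hf0]; simp
      rw [hf_one] at this; norm_num at this
  have hn' : (0:ℝ) < n := by exact_mod_cast hn
  set b : ℝ := n / (2 * S) with hb
  have hb_pos : 0 < b := by positivity
  set I : ℝ := (π / b) ^ ((n : ℝ) / 2) with hI
  have hI_pos : 0 < I := by
    have : (0:ℝ) < π / b := div_pos pi_pos hb_pos
    positivity
  -- Gaussian integral
  have hfinrank : Module.finrank ℝ (EuclideanSpace ℝ (Fin n)) = n := by
    simp [finrank_euclideanSpace]
  have hgauss : ∫ x : EuclideanSpace ℝ (Fin n), Real.exp (-b * ‖x‖ ^ 2) = I := by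
    rw [GaussianFourier.integral_rexp_neg_mul_sq_norm hb_pos, hfinrank]
  -- integrability of the Gaussian
  have hgauss_int : Integrable (fun x : EuclideanSpace ℝ (Fin n) =>
      Real.exp (-b * ‖x‖ ^ 2)) := by
    have := (GaussianFourier.integrable_cexp_neg_mul_sq_norm_add
      (V := EuclideanSpace ℝ (Fin n)) (b := (b:ℂ)) (by simpa using hb_pos) 0 0).norm
    simpa [Complex.norm_exp, ← Complex.ofReal_pow, neg_mul] using this
  -- the density to compare with
  set g : EuclideanSpace ℝ (Fin n) → ℝ := fun x => Real.exp (-b * ‖x‖ ^ 2) / I with hg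
  have hg_pos : ∀ x, 0 < g x := fun x => div_pos (Real.exp_pos _) hI_pos
  have hg_int : Integrable g := hgauss_int.div_const I
  have hg_one : ∫ x, g x = 1 := by
    rw [hg]
    simp only [integral_div, hgauss]
    field_simp
  -- f * log g is integrable, and compute its integral
  have hlogg_eq : ∀ x, f x * Real.log (g x) =
      -b * (‖x‖ ^ 2 * f x) - Real.log I * f x := by
    intro x
    rw [hg]
    rw [Real.log_div (Real.exp_pos _).ne' hI_pos.ne', Real.log_exp]
    ring
  have hlogg_int : Integrable (fun x => f x * Real.log (g x)) := by
    have : Integrable (fun x => -b * (‖x‖ ^ 2 * f x) - Real.log I * f x) :=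
      (h2.const_mul _).sub (hf_int.const_mul _)
    exact this.congr (Filter.Eventually.of_forall fun x => (hlogg_eq x).symm)
  have hlogg_val : ∫ x, f x * Real.log (g x) = -b * S - Real.log I := by
    rw [integral_congr_ae (Filter.Eventually.of_forall hlogg_eq),
      integral_sub (h2.const_mul _) (hf_int.const_mul _),
      integral_const_mul, integral_const_mul, hf_one, ← hS]
    ring
  -- Gibbs inequality via pointwise bound
  have key : ∫ x, (f x * Real.log (g x) - f x * Real.log (f x)) ≤ ∫ x, (g x - f x) := by
    apply integral_mono (hlogg_int.sub hlog) (hg_int.sub hf_int)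
    intro x
    exact gibbs_pointwise (hf_nonneg x) (hg_pos x)
  rw [integral_sub hlogg_int hlog, integral_sub hg_int hf_int, hlogg_val, hg_one,
    hf_one] at key
  -- so : -b*S - log I - ∫ f log f ≤ 0
  have hmain : -∫ x, f x * Real.log (f x) ≤ b * S + Real.log I := by linarith
  -- arithmetic
  have hbS : b * S = n / 2 := by
    rw [hb]; field_simp
  have hlogI : Real.log I = (n / 2 : ℝ) * Real.log (2 * π * S / n) := by
    rw [hI, Real.log_rpow (div_pos pi_pos hb_pos), hb]
    congr 1
    field_simp
  have hrhs : (n / 2 : ℝ) * Real.log ((2 * π * Real.exp 1 / n) * S)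
      = n / 2 + (n / 2 : ℝ) * Real.log (2 * π * S / n) := by
    have h1 : (2 * π * Real.exp 1 / n) * S = (2 * π * S / n) * Real.exp 1 := by
      field_simp
    rw [h1, Real.log_mul (by positivity) (Real.exp_pos 1).ne', Real.log_exp]
    ring
  rw [hrhs]
  calc -∫ x, f x * Real.log (f x) ≤ b * S + Real.log I := hmain
  _ = n / 2 + (n / 2 : ℝ) * Real.log (2 * π * S / n) := by rw [hbS, hlogI]
end

section
/- Let n ≥ 1 and let f : ℝⁿ → [0,∞) be a measurable function with ∫_{ℝⁿ} f(x) dx = 1, such that x ↦ |x|² f(x) is Lebesgue integrable and x ↦ f(x) log f(x) is Lebesgue integrable. Define Var(f) := inf_{y ∈ ℝⁿ} ∫_{ℝⁿ} |x − y|² f(x) dx. Then −∫_{ℝⁿ} f(x) log f(x) dx ≤ (n/2) · log( (2πe/n) · Var(f) ). -/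
open MeasureTheory Real

/-- The Gaussian `exp (-b ‖x‖²)` is integrable on `ℝⁿ`. -/
lemma shannon_aux_gauss_integrable {n : ℕ} {b : ℝ} (hb : 0 < b) :
    Integrable (fun v : EuclideanSpace ℝ (Fin n) => rexp (-b * ‖v‖ ^ 2)) := by
  have h := (GaussianFourier.integrable_cexp_neg_mul_sq_norm_add
    (by simpa using hb : (0:ℝ) < ((b : ℂ)).re) 0 (0 : EuclideanSpace ℝ (Fin n))).norm
  refine h.congr (Filter.Eventually.of_forall fun v => ?_)
  simp only [Complex.norm_exp]
  congr 1
  norm_cast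
  simp

/-- Value of the Gaussian integral on `ℝⁿ`. -/
lemma shannon_aux_gauss_integral {n : ℕ} {b : ℝ} (hb : 0 < b) :
    ∫ v : EuclideanSpace ℝ (Fin n), rexp (-b * ‖v‖ ^ 2) = (π / b) ^ ((n : ℝ) / 2) := by
  rw [GaussianFourier.integral_rexp_neg_mul_sq_norm hb, finrank_euclideanSpace_fin]

/-- **Variance form of Shannon's inequality on ℝⁿ.** For a probability density `f` on `ℝⁿ`
with finite second moment and integrable entropy integrand, setting
`Var(f) = inf_y ∫ |x - y|² f(x) dx`, one has
`-∫ f log f ≤ (n/2) log((2πe/n) Var(f))`. -/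
theorem shannon_inequality_variance_Rn (n : ℕ) (hn : 1 ≤ n)
    (f : EuclideanSpace ℝ (Fin n) → ℝ)
    (hf_meas : Measurable f) (hf_nonneg : ∀ x, 0 ≤ f x)
    (hf_int : Integrable f) (hf_one : ∫ x, f x = 1)
    (h2 : Integrable (fun x => ‖x‖ ^ 2 * f x))
    (hlog : Integrable (fun x => f x * Real.log (f x))) :
    -∫ x, f x * Real.log (f x) ≤
      (n / 2 : ℝ) * Real.log ((2 * π * Real.exp 1 / n) *
        ⨅ y : EuclideanSpace ℝ (Fin n), ∫ x, ‖x - y‖ ^ 2 * f x) := by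
  haveI : Nonempty (Fin n) := ⟨⟨0, hn⟩⟩
  have hn0 : (0:ℝ) < n := by exact_mod_cast hn
  -- integrability of x ↦ f x • x
  have hx_int : Integrable (fun x : EuclideanSpace ℝ (Fin n) => f x • x) := by
    refine Integrable.mono' (hf_int.add h2) ((hf_meas.smul measurable_id).aestronglyMeasurable)
      (Filter.Eventually.of_forall fun x => ?_)
    rw [norm_smul, Real.norm_of_nonneg (hf_nonneg x)]
    simp only [Pi.add_apply]
    nlinarith [hf_nonneg x, norm_nonneg x, sq_nonneg (‖x‖ - 1),
      mul_nonneg (hf_nonneg x) (sq_nonneg (‖x‖ - 1))]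
  -- integrability of second moments
  have hIint : ∀ y : EuclideanSpace ℝ (Fin n),
      Integrable (fun x => ‖x - y‖ ^ 2 * f x) := by
    intro y
    refine Integrable.mono' ((h2.const_mul 2).add (hf_int.const_mul (2 * ‖y‖ ^ 2)))
      ((((measurable_id.sub_const y).norm.pow_const 2).mul hf_meas).aestronglyMeasurable)
      (Filter.Eventually.of_forall fun x => ?_)
    have h1 : ‖x - y‖ ≤ ‖x‖ + ‖y‖ := norm_sub_le x y
    have h2' : ‖x - y‖ ^ 2 ≤ 2 * ‖x‖ ^ 2 + 2 * ‖y‖ ^ 2 := by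
      nlinarith [norm_nonneg (x - y), norm_nonneg x, norm_nonneg y, sq_nonneg (‖x‖ - ‖y‖)]
    have h3 : (0:ℝ) ≤ ‖x - y‖ ^ 2 * f x := mul_nonneg (sq_nonneg _) (hf_nonneg x)
    rw [Real.norm_of_nonneg h3]
    simp only [Pi.add_apply]
    nlinarith [mul_le_mul_of_nonneg_right h2' (hf_nonneg x)]
  set m : EuclideanSpace ℝ (Fin n) := ∫ x, f x • x with hm
  -- expansion of the second moment around y
  have key : ∀ y : EuclideanSpace ℝ (Fin n),
      ∫ x, ‖x - y‖ ^ 2 * f x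
        = (∫ x, ‖x‖ ^ 2 * f x) - 2 * (inner ℝ y m : ℝ) + ‖y‖ ^ 2 := by
    intro y
    have hsplit : (fun x : EuclideanSpace ℝ (Fin n) => ‖x - y‖ ^ 2 * f x)
        = fun x => (‖x‖ ^ 2 * f x - 2 * (inner ℝ y (f x • x) : ℝ)) + ‖y‖ ^ 2 * f x := by
      funext x
      have h1 : ‖x - y‖ ^ 2 = ‖x‖ ^ 2 - 2 * (inner ℝ x y : ℝ) + ‖y‖ ^ 2 := norm_sub_sq_real x y
      have hinner : (inner ℝ y (f x • x) : ℝ) = f x * (inner ℝ x y : ℝ) := by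
        rw [real_inner_smul_right, real_inner_comm]
      rw [h1, hinner]; ring
    have hA : Integrable (fun x : EuclideanSpace ℝ (Fin n) =>
        ‖x‖ ^ 2 * f x - 2 * (inner ℝ y (f x • x) : ℝ)) volume :=
      h2.sub ((hx_int.const_inner y).const_mul 2)
    have hB : Integrable (fun x : EuclideanSpace ℝ (Fin n) => ‖y‖ ^ 2 * f x) volume :=
      hf_int.const_mul _
    rw [hsplit, integral_add hA hB,
      integral_sub h2 ((hx_int.const_inner y).const_mul 2),
      integral_const_mul, integral_const_mul, integral_inner hx_int y, hf_one, mul_one]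
  -- the mean minimizes the second moment
  have hmin : ∀ y : EuclideanSpace ℝ (Fin n),
      (∫ x, ‖x - m‖ ^ 2 * f x) ≤ ∫ x, ‖x - y‖ ^ 2 * f x := by
    intro y
    rw [key m, key y]
    have h1 : ‖y - m‖ ^ 2 = ‖y‖ ^ 2 - 2 * (inner ℝ y m : ℝ) + ‖m‖ ^ 2 := norm_sub_sq_real y m
    have h2' : (inner ℝ m m : ℝ) = ‖m‖ ^ 2 := real_inner_self_eq_norm_sq m
    nlinarith [sq_nonneg ‖y - m‖]
  set V : ℝ := ∫ x, ‖x - m‖ ^ 2 * f x with hV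
  have hVnonneg : 0 ≤ V :=
    integral_nonneg fun x => mul_nonneg (sq_nonneg _) (hf_nonneg x)
  have hinf : (⨅ y : EuclideanSpace ℝ (Fin n), ∫ x, ‖x - y‖ ^ 2 * f x) = V := by
    refine le_antisymm (ciInf_le ⟨V, ?_⟩ m) (le_ciInf hmin)
    rintro a ⟨y, rfl⟩
    exact hmin y
  -- V > 0
  have hVpos : 0 < V := by
    rcases hVnonneg.lt_or_eq with h | h
    · exact h
    · exfalso
      have hz : (fun x => ‖x - m‖ ^ 2 * f x) =ᵐ[volume] 0 :=
        (integral_eq_zero_iff_of_nonneg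
          (fun x => mul_nonneg (sq_nonneg _) (hf_nonneg x)) (hIint m)).mp h.symm
      have h0 : volume ({m} : Set (EuclideanSpace ℝ (Fin n))) = 0 := measure_singleton m
      have hae : ∀ᵐ x : EuclideanSpace ℝ (Fin n), x ≠ m := by
        rw [ae_iff]
        simpa only [not_not, Set.setOf_eq_eq_singleton] using h0
      have hf0 : f =ᵐ[volume] 0 := by
        filter_upwards [hz, hae] with x h1 h2'
        have hne : ‖x - m‖ ≠ 0 := by simpa [sub_eq_zero] using h2'
        have : ‖x - m‖ ^ 2 * f x = 0 := h1
        rcases mul_eq_zero.mp this with h3 | h3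
        · exact absurd (pow_eq_zero_iff (by norm_num) |>.mp h3) hne
        · exact h3
      rw [integral_congr_ae hf0] at hf_one
      simp at hf_one
  -- the Gaussian comparison density
  set c : ℝ := n / (2 * V) with hc
  have hcpos : 0 < c := by positivity
  set Z : ℝ := (π / c) ^ ((n : ℝ) / 2) with hZ
  have hZpos : 0 < Z := by
    have := Real.pi_pos
    positivity
  set g : EuclideanSpace ℝ (Fin n) → ℝ := fun x => Z⁻¹ * rexp (-c * ‖x - m‖ ^ 2) with hg
  have hgauss_int : Integrable (fun x : EuclideanSpace ℝ (Fin n) => rexp (-c * ‖x - m‖ ^ 2)) :=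
    (shannon_aux_gauss_integrable hcpos).comp_sub_right m
  have hgauss_val : ∫ x : EuclideanSpace ℝ (Fin n), rexp (-c * ‖x - m‖ ^ 2) = Z := by
    rw [integral_sub_right_eq_self (fun x => rexp (-c * ‖x‖ ^ 2)) m,
      shannon_aux_gauss_integral hcpos]
  have hg_int : Integrable g := hgauss_int.const_mul _
  have hg_pos : ∀ x, 0 < g x := fun x => mul_pos (inv_pos.mpr hZpos) (Real.exp_pos _)
  have hg_one : ∫ x, g x = 1 := by
    simp only [hg]
    rw [integral_const_mul, hgauss_val, inv_mul_cancel₀ hZpos.ne']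
  have hlogg : ∀ x, Real.log (g x) = -Real.log Z - c * ‖x - m‖ ^ 2 := by
    intro x
    simp only [hg]
    rw [Real.log_mul (inv_ne_zero hZpos.ne') (Real.exp_ne_zero _), Real.log_inv, Real.log_exp]
    ring
  -- integrability of f log g
  have hflogg_int : Integrable (fun x => f x * Real.log (g x)) := by
    have hA : Integrable (fun x => -Real.log Z * f x - c * (‖x - m‖ ^ 2 * f x)) volume :=
      (hf_int.const_mul (-Real.log Z)).sub ((hIint m).const_mul c)
    refine hA.congr (Filter.Eventually.of_forall fun x => ?_)
    show -Real.log Z * f x - c * (‖x - m‖ ^ 2 * f x) = f x * Real.log (g x)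
    rw [hlogg x]; ring
  -- value of ∫ f log g
  have hflogg_eq : ∫ x, f x * Real.log (g x) = -Real.log Z - c * V := by
    have : (fun x => f x * Real.log (g x))
        = fun x => (-Real.log Z) * f x - c * (‖x - m‖ ^ 2 * f x) := by
      funext x; rw [hlogg x]; ring
    have hA : Integrable (fun x => -Real.log Z * f x) volume := hf_int.const_mul _
    have hB : Integrable (fun x => c * (‖x - m‖ ^ 2 * f x)) volume := (hIint m).const_mul c
    rw [this, integral_sub hA hB, integral_const_mul, integral_const_mul, hf_one, ← hV, mul_one]
  -- Gibbs' inequality pointwise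
  have hpt : ∀ x, f x * Real.log (g x) - f x * Real.log (f x) ≤ g x - f x := by
    intro x
    rcases (hf_nonneg x).eq_or_lt with h | h
    · simp only [← h, zero_mul, sub_zero, Real.log_zero, mul_zero, sub_zero]
      exact (hg_pos x).le
    · have hgx := hg_pos x
      have hlog' := Real.log_le_sub_one_of_pos (div_pos hgx h)
      rw [Real.log_div hgx.ne' h.ne'] at hlog'
      calc f x * Real.log (g x) - f x * Real.log (f x)
          = f x * (Real.log (g x) - Real.log (f x)) := by ring
        _ ≤ f x * (g x / f x - 1) := mul_le_mul_of_nonneg_left hlog' h.le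
        _ = g x - f x := by field_simp
  -- Gibbs' inequality
  have hgibbs : (∫ x, f x * Real.log (g x)) - ∫ x, f x * Real.log (f x) ≤ 0 := by
    have h1 : ∫ x, (f x * Real.log (g x) - f x * Real.log (f x))
        ≤ ∫ x, (g x - f x) :=
      integral_mono (hflogg_int.sub hlog) (hg_int.sub hf_int) hpt
    rw [integral_sub hflogg_int hlog, integral_sub hg_int hf_int, hg_one, hf_one] at h1
    linarith
  -- assemble
  have hcV : c * V = n / 2 := by
    rw [hc]; field_simp
  have hlogZ : Real.log Z = (n / 2 : ℝ) * Real.log (π / c) := by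
    rw [hZ, Real.log_rpow (div_pos Real.pi_pos hcpos)]
  have hentropy : -∫ x, f x * Real.log (f x) ≤ Real.log Z + n / 2 := by
    have := hgibbs
    rw [hflogg_eq] at this
    linarith [hcV ▸ this]
  rw [hinf]
  have harg : (2 * π * Real.exp 1 / n) * V = Real.exp 1 * (π / c) := by
    rw [hc]; field_simp
  have hlog_arg : Real.log ((2 * π * Real.exp 1 / n) * V)
      = 1 + Real.log (π / c) := by
    rw [harg, Real.log_mul (Real.exp_ne_zero 1) (div_pos Real.pi_pos hcpos).ne',
      Real.log_exp]
  rw [hlog_arg]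
  rw [mul_add, mul_one]
  linarith [hentropy, hlogZ]
end

section
/- Let n ≥ 1, t > 0, and let G_t(x) := (4πt)^{−n/2} exp(−|x|²/(4t)) be the Gaussian density on ℝⁿ. Then equality holds in Shannon's inequality for G_t, namely −∫_{ℝⁿ} G_t(x) log G_t(x) dx = (n/2) · log( (2πe/n) · ∫_{ℝⁿ} |x|² G_t(x) dx ). -/
open MeasureTheory Real Set

lemma auxcast (k : ℕ) : (-1 : ℝ) < (k : ℝ) := by
  have := Nat.cast_nonneg (α := ℝ) k; linarith

lemma auxJ_int {b : ℝ} (hb : 0 < b) (k : ℕ) :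
    IntegrableOn (fun y : ℝ => y ^ k * Real.exp (-b * y ^ 2)) (Ioi 0) := by
  refine (integrableOn_rpow_mul_exp_neg_mul_rpow
    (s := (k : ℝ)) (p := 2) (auxcast k) two_pos hb).congr_fun ?_ measurableSet_Ioi
  intro y hy
  simp only []
  rw [Real.rpow_natCast, Real.rpow_two]

lemma auxJ {b : ℝ} (hb : 0 < b) (k : ℕ) :
    ∫ y in Ioi (0:ℝ), y ^ k * Real.exp (-b * y ^ 2) =
      b ^ (-((k : ℝ) + 1) / 2) * (1 / 2) * Real.Gamma (((k : ℝ) + 1) / 2) := by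
  rw [← integral_rpow_mul_exp_neg_mul_rpow (p := 2) (q := (k : ℝ)) two_pos (auxcast k) hb]
  refine setIntegral_congr_fun measurableSet_Ioi fun y hy => ?_
  rw [Real.rpow_natCast, Real.rpow_two]

/-- **Sharpness of Shannon's inequality.** The Gaussian density
`G_t(x) = (4πt)^{-n/2} exp(-|x|²/(4t))` attains equality in Shannon's inequality. -/
theorem shannon_equality_gaussian (n : ℕ) (hn : 1 ≤ n) (t : ℝ) (ht : 0 < t)
    (G : EuclideanSpace ℝ (Fin n) → ℝ)
    (hG : G = fun x => (4 * π * t) ^ (-(n : ℝ) / 2) * Real.exp (-‖x‖ ^ 2 / (4 * t))) :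
    -∫ x, G x * Real.log (G x) =
      (n / 2 : ℝ) * Real.log ((2 * π * Real.exp 1 / n) * ∫ x, ‖x‖ ^ 2 * G x) := by
  have hπ : 0 < π := Real.pi_pos
  have hn' : (1 : ℝ) ≤ (n : ℝ) := by exact_mod_cast hn
  haveI : Nontrivial (EuclideanSpace ℝ (Fin n)) := Module.nontrivial_of_finrank_pos (R := ℝ)
    (by rw [finrank_euclideanSpace_fin]; omega)
  have hdim : Module.finrank ℝ (EuclideanSpace ℝ (Fin n)) = n := finrank_euclideanSpace_fin
  set b : ℝ := 1 / (4 * t) with hbdef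
  have hb : 0 < b := by positivity
  set A : ℝ := (4 * π * t) ^ (-(n : ℝ) / 2) with hAdef
  have hA : 0 < A := Real.rpow_pos_of_pos (by positivity) _
  have hGx : ∀ x : EuclideanSpace ℝ (Fin n), G x = A * Real.exp (-b * ‖x‖ ^ 2) := by
    intro x; rw [hG]; simp only []
    congr 1
    rw [hbdef]; ring_nf
  set C : ℝ := n * (volume (Metric.ball (0 : EuclideanSpace ℝ (Fin n)) 1)).toReal with hCdef
  have hradial : ∀ f : ℝ → ℝ, ∫ x : EuclideanSpace ℝ (Fin n), f ‖x‖ =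
      C * ∫ y in Ioi (0:ℝ), y ^ (n - 1) * f y := by
    intro f
    rw [MeasureTheory.integral_fun_norm_addHaar volume f, hdim]
    simp only [nsmul_eq_mul, smul_eq_mul, hCdef, mul_assoc, measureReal_def]
  -- 1-D Gamma computations
  have hcast1 : ((n - 1 : ℕ) : ℝ) + 1 = (n : ℝ) := by
    have h : ((n - 1 : ℕ) : ℝ) = (n : ℝ) - 1 := by
      rw [Nat.cast_sub hn]; norm_num
    rw [h]; ring
  have hJ1v : ∫ y in Ioi (0:ℝ), y ^ (n - 1) * Real.exp (-b * y ^ 2) =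
      b ^ (-(n : ℝ) / 2) * (1 / 2) * Real.Gamma ((n : ℝ) / 2) := by
    rw [auxJ hb (n - 1), hcast1]
  have hJ2 : ∫ y in Ioi (0:ℝ), y ^ (n + 1) * Real.exp (-b * y ^ 2) =
      ((n : ℝ) / (2 * b)) * ∫ y in Ioi (0:ℝ), y ^ (n - 1) * Real.exp (-b * y ^ 2) := by
    rw [hJ1v, auxJ hb (n + 1)]
    have hc : ((n + 1 : ℕ) : ℝ) + 1 = (n : ℝ) + 2 := by push_cast; ring
    rw [hc]
    have h1 : ((n : ℝ) + 2) / 2 = (n : ℝ) / 2 + 1 := by ring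
    have h2 : Real.Gamma ((n : ℝ) / 2 + 1) = ((n : ℝ) / 2) * Real.Gamma ((n : ℝ) / 2) :=
      Real.Gamma_add_one (by positivity)
    have h3 : b ^ (-((n : ℝ) + 2) / 2) = b⁻¹ * b ^ (-(n : ℝ) / 2) := by
      rw [show -((n : ℝ) + 2) / 2 = (-1) + (-(n : ℝ) / 2) by ring, Real.rpow_add hb,
        Real.rpow_neg_one]
    rw [h1, h2, h3]
    field_simp
  -- total mass
  have hpib : π / b = 4 * π * t := by rw [hbdef]; field_simp
  have hK1 : C * ∫ y in Ioi (0:ℝ), y ^ (n - 1) * Real.exp (-b * y ^ 2) = A⁻¹ := by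
    have h0 := GaussianFourier.integral_rexp_neg_mul_sq_norm (V := EuclideanSpace ℝ (Fin n)) hb
    rw [hdim] at h0
    have h1 := (hradial (fun r => Real.exp (-b * r ^ 2))).symm.trans h0
    rw [h1, hpib, hAdef, neg_div, Real.rpow_neg (by positivity), inv_inv]
  -- second moment
  have hM : ∫ x, ‖x‖ ^ 2 * G x = 2 * (n : ℝ) * t := by
    have h1 : ∫ x, ‖x‖ ^ 2 * G x =
        ∫ x : EuclideanSpace ℝ (Fin n), (fun r : ℝ => r ^ 2 * (A * Real.exp (-b * r ^ 2))) ‖x‖ := by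
      congr 1; funext x; rw [hGx x]
    have h2 : ∫ y in Ioi (0:ℝ), y ^ (n - 1) * (y ^ 2 * (A * Real.exp (-b * y ^ 2))) =
        A * ∫ y in Ioi (0:ℝ), y ^ (n + 1) * Real.exp (-b * y ^ 2) := by
      rw [← MeasureTheory.integral_const_mul]
      refine setIntegral_congr_fun measurableSet_Ioi fun y hy => ?_
      have : y ^ (n - 1) * y ^ 2 = y ^ (n + 1) := by
        rw [← pow_add]; congr 1; omega
      calc y ^ (n - 1) * (y ^ 2 * (A * Real.exp (-b * y ^ 2)))
          = A * (y ^ (n - 1) * y ^ 2 * Real.exp (-b * y ^ 2)) := by ring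
        _ = A * (y ^ (n + 1) * Real.exp (-b * y ^ 2)) := by rw [this]
    rw [h1, hradial (fun r : ℝ => r ^ 2 * (A * Real.exp (-b * r ^ 2))), h2, hJ2]
    rw [show C * (A * (((n : ℝ) / (2 * b)) * ∫ y in Ioi (0:ℝ), y ^ (n - 1) * Real.exp (-b * y ^ 2)))
        = A * ((n : ℝ) / (2 * b)) * (C * ∫ y in Ioi (0:ℝ), y ^ (n - 1) * Real.exp (-b * y ^ 2))
        by ring, hK1]
    rw [hbdef]
    field_simp
    ring
  -- entropy integral
  have hEnt : ∫ x, G x * Real.log (G x) = Real.log A - (n : ℝ) / 2 := by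
    have h1 : ∫ x, G x * Real.log (G x) =
        ∫ x : EuclideanSpace ℝ (Fin n),
          (fun r : ℝ => A * Real.exp (-b * r ^ 2) * (Real.log A - b * r ^ 2)) ‖x‖ := by
      congr 1; funext x
      rw [hGx x, Real.log_mul hA.ne' (Real.exp_ne_zero _), Real.log_exp]
      ring
    have h2 : ∫ y in Ioi (0:ℝ), y ^ (n - 1) * (A * Real.exp (-b * y ^ 2) * (Real.log A - b * y ^ 2)) =
        (A * Real.log A) * (∫ y in Ioi (0:ℝ), y ^ (n - 1) * Real.exp (-b * y ^ 2)) -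
        (A * b) * ∫ y in Ioi (0:ℝ), y ^ (n + 1) * Real.exp (-b * y ^ 2) := by
      rw [← MeasureTheory.integral_const_mul, ← MeasureTheory.integral_const_mul, ← integral_sub
        (((auxJ_int hb (n - 1)).const_mul _))
        (((auxJ_int hb (n + 1)).const_mul _))]
      refine setIntegral_congr_fun measurableSet_Ioi fun y hy => ?_
      have hpow : y ^ (n - 1) * y ^ 2 = y ^ (n + 1) := by
        rw [← pow_add]; congr 1; omega
      calc y ^ (n - 1) * (A * Real.exp (-b * y ^ 2) * (Real.log A - b * y ^ 2))
          = A * Real.log A * (y ^ (n - 1) * Real.exp (-b * y ^ 2)) -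
            A * b * (y ^ (n - 1) * y ^ 2 * Real.exp (-b * y ^ 2)) := by ring
        _ = _ := by rw [hpow]
    rw [h1, hradial (fun r : ℝ => A * Real.exp (-b * r ^ 2) * (Real.log A - b * r ^ 2)), h2, hJ2, mul_sub]
    rw [show C * ((A * Real.log A) * ∫ y in Ioi (0:ℝ), y ^ (n - 1) * Real.exp (-b * y ^ 2))
        = A * Real.log A * (C * ∫ y in Ioi (0:ℝ), y ^ (n - 1) * Real.exp (-b * y ^ 2)) by ring,
      show C * ((A * b) * (((n : ℝ) / (2 * b)) * ∫ y in Ioi (0:ℝ), y ^ (n - 1) * Real.exp (-b * y ^ 2)))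
        = (A * b * ((n : ℝ) / (2 * b))) * (C * ∫ y in Ioi (0:ℝ), y ^ (n - 1) * Real.exp (-b * y ^ 2))
        by ring, hK1]
    field_simp
  -- conclude
  rw [hEnt, hM]
  have hlogA : Real.log A = (-(n : ℝ) / 2) * Real.log (4 * π * t) := by
    rw [hAdef, Real.log_rpow (by positivity)]
  have harg : 2 * π * Real.exp 1 / (n : ℝ) * (2 * (n : ℝ) * t) = (4 * π * t) * Real.exp 1 := by
    have hn0 : (n : ℝ) ≠ 0 := by linarith
    field_simp
    ring
  rw [harg, Real.log_mul (by positivity) (Real.exp_ne_zero _), Real.log_exp, hlogA]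
  ring
end

section
/- Let H := ℝ × [0,∞) be the closed upper half-plane with two-dimensional Lebesgue measure, and for t > 0 define q_t : H → ℝ by q_t(y) := (2πt)^{−1} exp(−|y|²/(4t)), where |y| is the Euclidean norm of y ∈ ℝ². Then ∫_H q_t(y) dy = 1 and ∫_H q_t(y) log q_t(y) dy = log 2 − log(4πe t). Consequently, with U(t) := exp(−(1/2) ∫_H q_t log q_t dy) = √(2πe t), one has (1/√t) ∫₀ᵗ (1/U(s)) ds = √(2/(πe)) for every t > 0. -/
open MeasureTheory Real Set

noncomputable def Tmap : (ℝ × ℝ) ≃ᵐ EuclideanSpace ℝ (Fin 2) :=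
  MeasurableEquiv.finTwoArrow.symm.trans (MeasurableEquiv.toLp 2 (Fin 2 → ℝ))

lemma Tmap_apply (p : ℝ × ℝ) (i : Fin 2) : Tmap p i = ![p.1, p.2] i := by
  simp [Tmap, MeasurableEquiv.finTwoArrow, MeasurableEquiv.toLp]
  fin_cases i <;> rfl

lemma Tmap_mp : MeasurePreserving Tmap :=
  ((EuclideanSpace.volume_preserving_symm_measurableEquiv_toLp (Fin 2)).symm _).comp
    ((volume_preserving_finTwoArrow ℝ).symm _)

lemma transfer (G : ℝ → ℝ) :
    ∫ y in {y : EuclideanSpace ℝ (Fin 2) | 0 ≤ y 1}, G (‖y‖ ^ 2)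
      = ∫ p in (univ ×ˢ Ici (0:ℝ)), G (p.1 ^ 2 + p.2 ^ 2) := by
  rw [← Tmap_mp.setIntegral_preimage_emb (Tmap.measurableEmbedding)
    (fun y => G (‖y‖ ^ 2)) _]
  have hset : Tmap ⁻¹' {y : EuclideanSpace ℝ (Fin 2) | 0 ≤ y 1} = univ ×ˢ Ici (0:ℝ) := by
    ext p
    simp [Tmap_apply]
  rw [hset]
  refine setIntegral_congr_fun (MeasurableSet.prod MeasurableSet.univ measurableSet_Ici)
    (fun p _ => ?_)
  congr 1
  rw [EuclideanSpace.norm_eq, Real.sq_sqrt (by positivity)]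
  simp [Tmap_apply, Fin.sum_univ_two]

lemma gB {b : ℝ} (hb : 0 < b) :
    ∫ x in Ici (0:ℝ), exp (-b * x ^ 2) = √π / √b / 2 := by
  rw [integral_Ici_eq_integral_Ioi, integral_gaussian_Ioi, Real.sqrt_div pi_pos.le]

lemma gA {b : ℝ} (hb : 0 < b) :
    ∫ x : ℝ, exp (-b * x ^ 2) = √π / √b := by
  rw [integral_gaussian, Real.sqrt_div pi_pos.le]

lemma gD {b : ℝ} (hb : 0 < b) :
    ∫ x in Ici (0:ℝ), x ^ 2 * exp (-b * x ^ 2) = √π / (√b * b) / 4 := by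
  rw [integral_Ici_eq_integral_Ioi]
  have h := integral_rpow_mul_exp_neg_mul_rpow (p := 2) (q := 2) (b := b)
    two_pos (by norm_num) hb
  have h2 : ∀ x : ℝ, x ^ (2:ℝ) = x ^ 2 := fun x => by
    rw [show (2:ℝ) = ((2:ℕ):ℝ) by norm_num, Real.rpow_natCast]
  simp_rw [h2] at h
  rw [h]
  have hΓ : Real.Gamma ((2 + 1) / 2) = √π / 2 := by
    rw [show ((2:ℝ)+1)/2 = 1/2 + 1 by norm_num, Real.Gamma_add_one (by norm_num),
      Real.Gamma_one_half_eq]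
    ring
  have hb32 : b ^ (-(2 + 1) / 2 : ℝ) = (b * √b)⁻¹ := by
    rw [show (-(2+1)/2 : ℝ) = -((1:ℝ) + 1/2) by norm_num, Real.rpow_neg hb.le,
      Real.rpow_add hb, Real.rpow_one, ← Real.sqrt_eq_rpow]
  rw [hΓ, hb32]
  have hsb : √b ≠ 0 := by positivity
  field_simp
  ring_nf

lemma intD {b : ℝ} (hb : 0 < b) :
    Integrable (fun x : ℝ => x ^ 2 * exp (-b * x ^ 2)) := by
  have h := integrable_rpow_mul_exp_neg_mul_sq hb (s := 2) (by norm_num)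
  have h2 : ∀ x : ℝ, x ^ (2:ℝ) = x ^ 2 := fun x => by
    rw [show (2:ℝ) = ((2:ℕ):ℝ) by norm_num, Real.rpow_natCast]
  simpa [h2] using h

lemma gC {b : ℝ} (hb : 0 < b) :
    ∫ x : ℝ, x ^ 2 * exp (-b * x ^ 2) = √π / (√b * b) / 2 := by
  have hint := intD hb
  rw [← intervalIntegral.integral_Iic_add_Ioi (b := (0:ℝ)) hint.integrableOn hint.integrableOn]
  have : ∫ x in Iic (0:ℝ), x ^ 2 * exp (-b * x ^ 2)
      = ∫ x in Ioi (0:ℝ), x ^ 2 * exp (-b * x ^ 2) := by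
    have hfe : (fun x : ℝ => x ^ 2 * exp (-b * x ^ 2))
        = fun x : ℝ => (-x) ^ 2 * exp (-b * (-x) ^ 2) := by
      funext x; rw [neg_sq]
    rw [hfe, integral_comp_neg_Iic 0 (fun x => x ^ 2 * exp (-b * x ^ 2)), neg_zero]
    simp [neg_sq]
  rw [this, ← integral_Ici_eq_integral_Ioi, gD hb]
  ring

/-- **Heat kernel at a boundary point of the upper half-plane.** On
`H = {y ∈ ℝ² : y₂ ≥ 0}` with 2-dimensional Lebesgue measure, the reflected heat kernel
`q_t(y) = (2πt)⁻¹ exp(-|y|²/(4t))` at the corner point is a probability density with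
entropy `log 2 - log(4πe t)`; consequently, with `U(s) = √(2πe s)`,
`(1/√t) ∫₀ᵗ ds/U(s) = √(2/(πe))`. -/
theorem upper_half_plane_heat_kernel (t : ℝ) (ht : 0 < t)
    (H : Set (EuclideanSpace ℝ (Fin 2))) (hH : H = {y | 0 ≤ y 1})
    (q : EuclideanSpace ℝ (Fin 2) → ℝ)
    (hq : q = fun y => (2 * π * t)⁻¹ * Real.exp (-‖y‖ ^ 2 / (4 * t))) :
    (∫ y in H, q y = 1) ∧
    (∫ y in H, q y * Real.log (q y) =
        Real.log 2 - Real.log (4 * π * Real.exp 1 * t)) ∧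
    ((1 / Real.sqrt t) * ∫ s in Ioc (0 : ℝ) t, 1 / Real.sqrt (2 * π * Real.exp 1 * s) =
        Real.sqrt (2 / (π * Real.exp 1))) := by
  have hπ := Real.pi_pos
  set K : ℝ := (2 * π * t)⁻¹ with hK
  set b : ℝ := (4 * t)⁻¹ with hb'
  have hb : 0 < b := by positivity
  have hKpos : 0 < K := by positivity
  -- square root bookkeeping
  set sp : ℝ := √π with hsp'
  set st : ℝ := √t with hst'
  have hsp2 : sp ^ 2 = π := Real.sq_sqrt hπ.le
  have hst2 : st ^ 2 = t := Real.sq_sqrt ht.le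
  have hsppos : 0 < sp := Real.sqrt_pos.mpr hπ
  have hstpos : 0 < st := Real.sqrt_pos.mpr ht
  have hsb : √b = (2 * st)⁻¹ := by
    rw [hb', Real.sqrt_inv, show (4:ℝ) * t = 2 ^ 2 * t by ring,
      Real.sqrt_mul (by positivity), Real.sqrt_sq (by norm_num), hst']
  -- the four 1-D integrals
  have hA : ∫ x : ℝ, exp (-b * x ^ 2) = sp * (2 * st) := by
    rw [gA hb, hsb]; field_simp; rw [hsp']
  have hB : ∫ x in Ici (0:ℝ), exp (-b * x ^ 2) = sp * st := by
    rw [gB hb, hsb]; field_simp; ring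
  have hC : ∫ x : ℝ, x ^ 2 * exp (-b * x ^ 2) = 4 * sp * t * st := by
    rw [gC hb, hsb, hb']
    field_simp
    ring
  have hD : ∫ x in Ici (0:ℝ), x ^ 2 * exp (-b * x ^ 2) = 2 * sp * t * st := by
    rw [gD hb, hsb, hb']
    field_simp
    ring
  -- measure bookkeeping
  have hmeas : (volume : Measure (ℝ × ℝ)).restrict (univ ×ˢ Ici (0:ℝ))
      = (volume : Measure ℝ).prod ((volume : Measure ℝ).restrict (Ici (0:ℝ))) := by
    rw [MeasureTheory.Measure.volume_eq_prod, ← Measure.prod_restrict, Measure.restrict_univ]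
  have hf1 : Integrable (fun x : ℝ => exp (-b * x ^ 2)) := integrable_exp_neg_mul_sq hb
  have hf2 : Integrable (fun x : ℝ => x ^ 2 * exp (-b * x ^ 2)) := intD hb
  -- Part 1
  have part1 : ∫ y in H, q y = 1 := by
    have : ∫ y in H, q y = ∫ p in (univ ×ˢ Ici (0:ℝ)),
        (fun r => K * exp (-r / (4 * t))) (p.1 ^ 2 + p.2 ^ 2) := by
      rw [hH, hq]; exact transfer (fun r => K * exp (-r / (4 * t)))
    rw [this]
    rw [hmeas]
    have hsplit : (fun p : ℝ × ℝ => (fun r => K * exp (-r / (4 * t))) (p.1 ^ 2 + p.2 ^ 2))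
        = fun p : ℝ × ℝ => (K * exp (-b * p.1 ^ 2)) * exp (-b * p.2 ^ 2) := by
      funext p
      simp only [hb']
      rw [mul_assoc, ← Real.exp_add]
      congr 2
      field_simp
      ring
    rw [hsplit]
    have := integral_prod_mul (μ := (volume : Measure ℝ))
      (ν := (volume : Measure ℝ).restrict (Ici (0:ℝ)))
      (fun x : ℝ => K * exp (-b * x ^ 2)) (fun y : ℝ => exp (-b * y ^ 2))
    rw [this, integral_const_mul, hA, hB]
    have hspne : sp ≠ 0 := ne_of_gt hsppos
    have hstne : st ≠ 0 := ne_of_gt hstpos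
    rw [hK, ← hsp2, ← hst2]
    field_simp
  refine ⟨part1, ?_, ?_⟩
  · -- Part 2
    have hG2 : ∫ y in H, q y * Real.log (q y) = ∫ p in (univ ×ˢ Ici (0:ℝ)),
        (fun r => (K * exp (-r / (4 * t))) * Real.log (K * exp (-r / (4 * t))))
          (p.1 ^ 2 + p.2 ^ 2) := by
      rw [hH, hq]
      exact transfer (fun r => (K * exp (-r / (4 * t))) * Real.log (K * exp (-r / (4 * t))))
    rw [hG2, hmeas]
    have hsplit2 : (fun p : ℝ × ℝ =>
        (fun r => (K * exp (-r / (4 * t))) * Real.log (K * exp (-r / (4 * t))))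
          (p.1 ^ 2 + p.2 ^ 2))
        = fun p : ℝ × ℝ =>
            Real.log K * ((K * exp (-b * p.1 ^ 2)) * exp (-b * p.2 ^ 2))
            - ((K * b) * ((p.1 ^ 2 * exp (-b * p.1 ^ 2)) * exp (-b * p.2 ^ 2))
              + (K * b) * (exp (-b * p.1 ^ 2) * (p.2 ^ 2 * exp (-b * p.2 ^ 2)))) := by
      funext p
      have he : exp (-(p.1 ^ 2 + p.2 ^ 2) / (4 * t))
          = exp (-b * p.1 ^ 2) * exp (-b * p.2 ^ 2) := by
        rw [← Real.exp_add]
        congr 1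
        rw [hb']
        field_simp
        ring
      simp only []
      rw [Real.log_mul (ne_of_gt hKpos) (Real.exp_ne_zero _), Real.log_exp, he,
        show -(p.1 ^ 2 + p.2 ^ 2) / (4 * t) = -(p.1 ^ 2 + p.2 ^ 2) * b by
          rw [hb']; field_simp]
      ring
    rw [hsplit2]
    have h1' : Integrable (fun p : ℝ × ℝ =>
        Real.log K * ((K * exp (-b * p.1 ^ 2)) * exp (-b * p.2 ^ 2)))
        ((volume : Measure ℝ).prod ((volume : Measure ℝ).restrict (Ici (0:ℝ)))) :=
      (Integrable.mul_prod (hf1.const_mul K) hf1.restrict).const_mul _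
    have h2' : Integrable (fun p : ℝ × ℝ =>
        (K * b) * ((p.1 ^ 2 * exp (-b * p.1 ^ 2)) * exp (-b * p.2 ^ 2)))
        ((volume : Measure ℝ).prod ((volume : Measure ℝ).restrict (Ici (0:ℝ)))) :=
      (Integrable.mul_prod hf2 hf1.restrict).const_mul _
    have h3' : Integrable (fun p : ℝ × ℝ =>
        (K * b) * (exp (-b * p.1 ^ 2) * (p.2 ^ 2 * exp (-b * p.2 ^ 2))))
        ((volume : Measure ℝ).prod ((volume : Measure ℝ).restrict (Ici (0:ℝ)))) :=
      (Integrable.mul_prod hf1 hf2.restrict).const_mul _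
    have h23 : Integrable (fun p : ℝ × ℝ =>
        (K * b) * ((p.1 ^ 2 * exp (-b * p.1 ^ 2)) * exp (-b * p.2 ^ 2))
          + (K * b) * (exp (-b * p.1 ^ 2) * (p.2 ^ 2 * exp (-b * p.2 ^ 2))))
        ((volume : Measure ℝ).prod ((volume : Measure ℝ).restrict (Ici (0:ℝ)))) :=
      h2'.add h3'
    rw [integral_sub h1' h23, integral_add h2' h3',
      integral_const_mul, integral_const_mul, integral_const_mul,
      integral_prod_mul (fun x : ℝ => K * exp (-b * x ^ 2)) (fun y : ℝ => exp (-b * y ^ 2)),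
      integral_prod_mul (fun x : ℝ => x ^ 2 * exp (-b * x ^ 2)) (fun y : ℝ => exp (-b * y ^ 2)),
      integral_prod_mul (fun x : ℝ => exp (-b * x ^ 2)) (fun y : ℝ => y ^ 2 * exp (-b * y ^ 2)),
      integral_const_mul, hA, hB, hC, hD]
    have hlogK : Real.log K = -(Real.log 2 + Real.log π + Real.log t) := by
      rw [hK, Real.log_inv, Real.log_mul (by positivity) ht.ne',
        Real.log_mul (by norm_num) (ne_of_gt hπ)]
    have hlog4 : Real.log (4 * π * Real.exp 1 * t)
        = 2 * Real.log 2 + Real.log π + 1 + Real.log t := by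
      rw [Real.log_mul (by positivity) ht.ne',
        Real.log_mul (by positivity) (ne_of_gt (Real.exp_pos 1)), Real.log_exp,
        Real.log_mul (by norm_num) (ne_of_gt hπ),
        show (4:ℝ) = 2 ^ 2 by norm_num, Real.log_pow]
      push_cast
      ring
    have hfinal : Real.log 2 - Real.log (4 * π * Real.exp 1 * t) = Real.log K - 1 := by
      rw [hlogK, hlog4]; ring
    rw [hfinal]
    have hKe : K = (2 * sp ^ 2 * st ^ 2)⁻¹ := by rw [hK, hsp2, hst2]
    have hbe : b = (4 * st ^ 2)⁻¹ := by rw [hb', hst2]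
    have hte : t = st ^ 2 := hst2.symm
    rw [hKe, hbe, hte]
    have hspne : sp ≠ 0 := ne_of_gt hsppos
    have hstne : st ≠ 0 := ne_of_gt hstpos
    field_simp
    ring
  · -- Part 3
    have hc : (0:ℝ) < 2 * π * Real.exp 1 := by positivity
    have h1 : ∫ s in Ioc (0 : ℝ) t, 1 / Real.sqrt (2 * π * Real.exp 1 * s)
        = ∫ s in Ioc (0 : ℝ) t, (Real.sqrt (2 * π * Real.exp 1))⁻¹ * s ^ (-(1:ℝ)/2) := by
      refine setIntegral_congr_fun measurableSet_Ioc (fun s hs => ?_)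
      rw [Real.sqrt_mul hc.le, show ((-1:ℝ)/2) = -(1/2:ℝ) by norm_num,
        Real.rpow_neg (le_of_lt hs.1), ← Real.sqrt_eq_rpow]
      rw [one_div, mul_inv]
    rw [h1, integral_const_mul, ← intervalIntegral.integral_of_le ht.le,
      integral_rpow (Or.inl (by norm_num : (-1:ℝ) < (-1)/2))]
    have h0 : (0:ℝ) ^ ((-1:ℝ)/2 + 1) = 0 := by
      rw [Real.zero_rpow (by norm_num)]
    rw [h0, show (-1:ℝ)/2 + 1 = 1/2 by norm_num, ← Real.sqrt_eq_rpow]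
    have hstn : Real.sqrt t ≠ 0 := by positivity
    have h2 : Real.sqrt 2 * Real.sqrt 2 = 2 := Real.mul_self_sqrt (by norm_num)
    rw [Real.sqrt_div (by norm_num : (0:ℝ) ≤ 2),
      show 2 * π * Real.exp 1 = 2 * (π * Real.exp 1) by ring,
      Real.sqrt_mul (by norm_num : (0:ℝ) ≤ 2)]
    have hpe : Real.sqrt (π * Real.exp 1) ≠ 0 := by positivity
    field_simp
    ring_nf
    rw [Real.sq_sqrt (by norm_num : (0:ℝ) ≤ 2)]
end
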